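/- (No degeneracy defect theorem) Let X be a parafinite simplicial set with degeneracy operators S_{n,i} on its simplicial Hilbert space. Then for 0 ≤ i < j ≤ n, S_{n,i}† S_{n,j} = S_{n−1,j−1} S_{n−1,i}†. -/

import Mathlib

structure SimplicialSet where
  X : ℕ → Type
  d : (n : ℕ) → ℕ → X (n+1) → X n
  s : (n : ℕ) → ℕ → X n → X (n+1)
  dd : ∀ (n i j : ℕ), i < j → j ≤ n+2 → ∀ x : X (n+2),
    d n i (d (n+1) j x) = d n (j-1) (d (n+1) i x)
  ds_lt : ∀ (n i j : ℕ), i < j → j ≤ n+1 → ∀ x : X (n+1),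
    d (n+1) i (s (n+1) j x) = s n (j-1) (d n i x)
  ds_eq : ∀ (n j : ℕ), j ≤ n → ∀ x : X n, d n j (s n j x) = x
  ds_eq' : ∀ (n j : ℕ), j ≤ n → ∀ x : X n, d n (j+1) (s n j x) = x
  ds_gt : ∀ (n i j : ℕ), j+1 < i → i ≤ n+2 → ∀ x : X (n+1),
    d (n+1) i (s (n+1) j x) = s n j (d n (i-1) x)
  ss : ∀ (n i j : ℕ), i ≤ j → j ≤ n → ∀ x : X n,
    s (n+1) i (s n j x) = s (n+1) (j+1) (s n i x)

/-- The degeneracy operator `S_{n,i}` on the simplicial Hilbert space, defined on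
the simplex basis by `S_{n,i}|σ⟩ = |s_{n,i} σ⟩`. -/
noncomputable def Sop (G : SimplicialSet) [∀ n, Fintype (G.X n)]
    [∀ n, DecidableEq (G.X n)] (n i : ℕ) :
    EuclideanSpace ℂ (G.X n) →ₗ[ℂ] EuclideanSpace ℂ (G.X (n+1)) :=
  (PiLp.basisFun 2 ℂ (G.X n)).constr ℂ fun σ => EuclideanSpace.single (G.s n i σ) 1

lemma s_injective (G : SimplicialSet) (n i : ℕ) (hi : i ≤ n) :
    Function.Injective (G.s n i) := fun a b h => by
  have ha := G.ds_eq n i hi a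
  have hb := G.ds_eq n i hi b
  rw [← ha, ← hb, h]

lemma Sop_single (G : SimplicialSet) [∀ n, Fintype (G.X n)]
    [∀ n, DecidableEq (G.X n)] (n i : ℕ) (σ : G.X n) :
    Sop G n i (EuclideanSpace.single σ 1) = EuclideanSpace.single (G.s n i σ) 1 := by
  have : EuclideanSpace.single σ (1:ℂ) = (PiLp.basisFun 2 ℂ (G.X n)) σ :=
    (PiLp.basisFun_apply 2 ℂ (G.X n) σ).symm
  rw [this, Sop, Module.Basis.constr_basis]

lemma Sop_adjoint_apply (G : SimplicialSet) [∀ n, Fintype (G.X n)]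
    [∀ n, DecidableEq (G.X n)] (n i : ℕ) (x : EuclideanSpace ℂ (G.X (n+1)))
    (ζ : G.X n) :
    (LinearMap.adjoint (Sop G n i)) x ζ = x (G.s n i ζ) := by
  have h1 : (LinearMap.adjoint (Sop G n i)) x ζ
      = inner ℂ (EuclideanSpace.single ζ (1:ℂ)) ((LinearMap.adjoint (Sop G n i)) x) := by
    rw [EuclideanSpace.inner_single_left]; simp
  rw [h1, LinearMap.adjoint_inner_right, Sop_single, EuclideanSpace.inner_single_left]
  simp

theorem no_degeneracy_defect (G : SimplicialSet) [∀ n, Fintype (G.X n)]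
    [∀ n, DecidableEq (G.X n)] (n i j : ℕ) (hij : i < j) (hj : j ≤ n + 1) :
    LinearMap.adjoint (Sop G (n+1) i) ∘ₗ Sop G (n+1) j
      = Sop G n (j-1) ∘ₗ LinearMap.adjoint (Sop G n i) := by
  have hi_n : i ≤ n := by omega
  apply (PiLp.basisFun 2 ℂ (G.X (n+1))).ext
  intro σ
  have hb : (PiLp.basisFun 2 ℂ (G.X (n+1))) σ = EuclideanSpace.single σ (1:ℂ) := by
    simp [PiLp.basisFun_apply]
  rw [LinearMap.comp_apply, LinearMap.comp_apply, hb, Sop_single]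
  by_cases h : ∃ ζ, G.s n i ζ = σ
  · obtain ⟨ζ₀, hζ₀⟩ := h
    have hadj : (LinearMap.adjoint (Sop G n i)) (EuclideanSpace.single σ (1:ℂ))
        = EuclideanSpace.single ζ₀ (1:ℂ) := by
      ext ζ
      rw [Sop_adjoint_apply, EuclideanSpace.single_apply, EuclideanSpace.single_apply]
      by_cases hz : ζ = ζ₀
      · subst hz; simp [hζ₀]
      · have : G.s n i ζ ≠ σ := fun hc => hz (s_injective G n i hi_n (hc.trans hζ₀.symm))
        simp [this, hz]
    rw [hadj, Sop_single]
    -- LHS: adjoint S_{n+1,i} (single (s_{n+1,j} σ) 1) = single (s_{n,j-1} ζ₀) 1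
    ext τ
    rw [Sop_adjoint_apply, EuclideanSpace.single_apply, EuclideanSpace.single_apply]
    have key : G.s (n+1) i τ = G.s (n+1) j σ ↔ τ = G.s n (j-1) ζ₀ := by
      constructor
      · intro hc
        -- s_j σ = s_j (s_i ζ₀)... rewrite σ
        rw [← hζ₀] at hc
        have hcomm : G.s (n+1) j (G.s n i ζ₀) = G.s (n+1) i (G.s n (j-1) ζ₀) := by
          have := G.ss n i (j-1) (by omega) (by omega) ζ₀
          have hj1 : j - 1 + 1 = j := by omega
          rw [hj1] at this
          exact this.symm
        rw [hcomm] at hc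
        exact s_injective G (n+1) i (by omega) hc
      · intro hc
        subst hc
        rw [← hζ₀]
        have := G.ss n i (j-1) (by omega) (by omega) ζ₀
        have hj1 : j - 1 + 1 = j := by omega
        rw [hj1] at this
        exact this
    by_cases hc : τ = G.s n (j-1) ζ₀
    · subst hc
      rw [if_pos (key.mpr rfl), if_pos rfl]
    · have : ¬ (G.s (n+1) i τ = G.s (n+1) j σ) := fun hh => hc (key.mp hh)
      simp [hc, this]
  · have hadj : (LinearMap.adjoint (Sop G n i)) (EuclideanSpace.single σ (1:ℂ)) = 0 := by
      ext ζ
      rw [Sop_adjoint_apply, EuclideanSpace.single_apply]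
      have : G.s n i ζ ≠ σ := fun hc => h ⟨ζ, hc⟩
      simp [this]
    rw [hadj, map_zero]
    ext τ
    rw [Sop_adjoint_apply, EuclideanSpace.single_apply]
    have : G.s (n+1) i τ ≠ G.s (n+1) j σ := by
      intro hc
      -- apply d_{j+1}: σ = s_i (d_j τ)
      apply h
      refine ⟨G.d n (j+1-1) τ, ?_⟩
      have h1 := G.ds_gt n (j+1) i (by omega) (by omega) τ
      have h2 := G.ds_eq' (n+1) j hj σ
      rw [← hc] at h2
      rw [h1] at h2
      exact h2
    simp [this]
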